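/- Let (Ω, ℱ, P) be a probability space with ℱ a standard Borel σ-algebra, let X : Ω → ℝ^k be measurable, let D : Ω → {0,1} be measurable, and let π : ℝ^k → ℝ be a Borel measurable function such that E[D | σ(X)] = π ∘ X almost surely. Then D and X are conditionally independent given the σ-algebra σ(π ∘ X) generated by π ∘ X. -/

import Mathlib

open MeasureTheory ProbabilityTheory

/-- Balancing property of the propensity score (Rosenbaum–Rubin): for a binary treatment `D`
with `E[D | σ(X)] = π ∘ X` a.s., the treatment `D` and the covariates `X` are conditionally
independent given the σ-algebra generated by `π ∘ X`. -/
theorem stmt15 {Ω : Type*} [MeasurableSpace Ω] [StandardBorelSpace Ω] [Nonempty Ω]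
    (P : Measure Ω) [IsProbabilityMeasure P]
    {k : ℕ} (X : Ω → (Fin k → ℝ)) (hX : Measurable X)
    (D : Ω → ℝ) (hD : Measurable D) (hD01 : ∀ ω, D ω = 0 ∨ D ω = 1)
    (π : (Fin k → ℝ) → ℝ) (hπ : Measurable π)
    (h : P[D | MeasurableSpace.comap X inferInstance] =ᵐ[P] fun ω => π (X ω)) :
    CondIndepFun (MeasurableSpace.comap (fun ω => π (X ω)) inferInstance)
      ((hπ.comp hX).comap_le) D X P := by
  have hmX : (MeasurableSpace.comap X inferInstance) ≤ ‹MeasurableSpace Ω› := hX.comap_le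
  have hGle : (MeasurableSpace.comap (fun ω => π (X ω)) inferInstance) ≤ ‹MeasurableSpace Ω› := (hπ.comp hX).comap_le
  have hGX : (MeasurableSpace.comap (fun ω => π (X ω)) inferInstance) ≤ (MeasurableSpace.comap X inferInstance) := by
    rintro s ⟨u, hu, rfl⟩
    exact ⟨π ⁻¹' u, hπ hu, rfl⟩
  have hπG : StronglyMeasurable[(MeasurableSpace.comap (fun ω => π (X ω)) inferInstance)] (fun ω => π (X ω)) :=
    (Measurable.of_comap_le le_rfl).stronglyMeasurable
  have hπGsm : AEStronglyMeasurable (fun ω => π (X ω)) P :=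
    ((hπG.mono hGle).aestronglyMeasurable)
  have hDi : Integrable D P := by
    refine (memLp_top_of_bound hD.aestronglyMeasurable 1
      (Filter.Eventually.of_forall ?_)).integrable le_top
    intro ω; rcases hD01 ω with hω | hω <;> simp [hω]
  have hπXi : Integrable (fun ω => π (X ω)) P := integrable_condExp.congr h
  have hDG : P[D | (MeasurableSpace.comap (fun ω => π (X ω)) inferInstance)] =ᵐ[P] fun ω => π (X ω) := by
    calc P[D | (MeasurableSpace.comap (fun ω => π (X ω)) inferInstance)] =ᵐ[P] P[P[D | (MeasurableSpace.comap X inferInstance)] | (MeasurableSpace.comap (fun ω => π (X ω)) inferInstance)] := (condExp_condExp_of_le hGX hmX).symm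
      _ =ᵐ[P] P[(fun ω => π (X ω)) | (MeasurableSpace.comap (fun ω => π (X ω)) inferInstance)] := condExp_congr_ae h
      _ = fun ω => π (X ω) := condExp_of_stronglyMeasurable hGle hπG hπXi
  have key : ∀ t : Set (Fin k → ℝ), MeasurableSet t →
      P[(X ⁻¹' t).indicator (fun _ => (1:ℝ)) * D | (MeasurableSpace.comap (fun ω => π (X ω)) inferInstance)]
        =ᵐ[P] fun ω => π (X ω) * (P⟦X ⁻¹' t | (MeasurableSpace.comap (fun ω => π (X ω)) inferInstance)⟧) ω := by
    intro t ht
    set g : Ω → ℝ := (X ⁻¹' t).indicator (fun _ => (1:ℝ)) with hgdef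
    have hg1 : ∀ ω, ‖g ω‖ ≤ 1 := by
      intro ω; by_cases hω : ω ∈ X ⁻¹' t <;> simp [hgdef, hω]
    have hgmX : StronglyMeasurable[(MeasurableSpace.comap X inferInstance)] g :=
      stronglyMeasurable_const.indicator ⟨t, ht, rfl⟩
    have hgi : Integrable g P := (integrable_const (1:ℝ)).indicator (hX ht)
    have hgsm : AEStronglyMeasurable g P := (hgmX.mono hmX).aestronglyMeasurable
    have hgD : Integrable (g * D) P := hDi.bdd_mul (c := 1) hgsm (Filter.Eventually.of_forall hg1)
    have hπg : Integrable ((fun ω => π (X ω)) * g) P := by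
      refine hπXi.mono (hπGsm.mul hgsm) (Filter.Eventually.of_forall fun ω => ?_)
      calc ‖π (X ω) * g ω‖ = ‖π (X ω)‖ * ‖g ω‖ := norm_mul _ _
        _ ≤ ‖π (X ω)‖ * 1 := by gcongr; exact hg1 ω
        _ = ‖π (X ω)‖ := mul_one _
    have step1 : P[g * D | (MeasurableSpace.comap X inferInstance)] =ᵐ[P] g * P[D | (MeasurableSpace.comap X inferInstance)] :=
      condExp_mul_of_stronglyMeasurable_left hgmX hgD hDi
    have step2 : g * P[D | (MeasurableSpace.comap X inferInstance)] =ᵐ[P] (fun ω => π (X ω)) * g := by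
      filter_upwards [h] with ω hω
      simp only [Pi.mul_apply, hω, mul_comm]
    have pullout : P[(fun ω => π (X ω)) * g | (MeasurableSpace.comap (fun ω => π (X ω)) inferInstance)] =ᵐ[P] (fun ω => π (X ω)) * P[g | (MeasurableSpace.comap (fun ω => π (X ω)) inferInstance)] :=
      condExp_mul_of_stronglyMeasurable_left hπG hπg hgi
    calc P[g * D | (MeasurableSpace.comap (fun ω => π (X ω)) inferInstance)] =ᵐ[P] P[P[g * D | (MeasurableSpace.comap X inferInstance)] | (MeasurableSpace.comap (fun ω => π (X ω)) inferInstance)] := (condExp_condExp_of_le hGX hmX).symm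
      _ =ᵐ[P] P[(fun ω => π (X ω)) * g | (MeasurableSpace.comap (fun ω => π (X ω)) inferInstance)] := condExp_congr_ae (step1.trans step2)
      _ =ᵐ[P] (fun ω => π (X ω)) * P[g | (MeasurableSpace.comap (fun ω => π (X ω)) inferInstance)] := pullout
      _ = fun ω => π (X ω) * (P⟦X ⁻¹' t | (MeasurableSpace.comap (fun ω => π (X ω)) inferInstance)⟧) ω := rfl
  rw [condIndepFun_iff_condExp_inter_preimage_eq_mul hD hX]
  intro s t hs ht
  set g : Ω → ℝ := (X ⁻¹' t).indicator (fun _ => (1:ℝ)) with hgdef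
  have hgi : Integrable g P := (integrable_const (1:ℝ)).indicator (hX ht)
  by_cases h0 : (0:ℝ) ∈ s <;> by_cases h1 : (1:ℝ) ∈ s
  · -- both: D ⁻¹' s = univ
    have hsu : D ⁻¹' s = Set.univ := by
      ext ω; rcases hD01 ω with hω | hω <;> simp [hω, h0, h1]
    rw [hsu, Set.univ_inter]
    have huniv : P⟦(Set.univ : Set Ω) | (MeasurableSpace.comap (fun ω => π (X ω)) inferInstance)⟧ =ᵐ[P] fun _ => (1:ℝ) := by
      rw [Set.indicator_univ]
      exact Filter.EventuallyEq.of_eq (condExp_const hGle (1:ℝ))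
    filter_upwards [huniv] with ω hω
    rw [hω, one_mul]
  · -- only 0 ∈ s : indicator = 1 - D
    have hind : (D ⁻¹' s ∩ X ⁻¹' t).indicator (fun _ => (1:ℝ)) = g - g * D := by
      funext ω
      by_cases hωt : ω ∈ X ⁻¹' t <;>
        rcases hD01 ω with hω | hω <;>
        simp [Set.indicator_apply, hgdef, hω, hωt, h0, h1]
    have hindD : (D ⁻¹' s).indicator (fun _ => (1:ℝ)) = (fun _ => (1:ℝ)) - D := by
      funext ω
      rcases hD01 ω with hω | hω <;> simp [Set.indicator_apply, hω, h0, h1]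
    have hgmX : StronglyMeasurable[(MeasurableSpace.comap X inferInstance)] g :=
      stronglyMeasurable_const.indicator ⟨t, ht, rfl⟩
    have hgsm : AEStronglyMeasurable g P := (hgmX.mono hmX).aestronglyMeasurable
    have hg1 : ∀ ω, ‖g ω‖ ≤ 1 := by
      intro ω; by_cases hω : ω ∈ X ⁻¹' t <;> simp [hgdef, hω]
    have hgD : Integrable (g * D) P := hDi.bdd_mul (c := 1) hgsm (Filter.Eventually.of_forall hg1)
    have hDs : P⟦D ⁻¹' s | (MeasurableSpace.comap (fun ω => π (X ω)) inferInstance)⟧ =ᵐ[P] fun ω => 1 - π (X ω) := by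
      rw [hindD]
      calc P[(fun _ => (1:ℝ)) - D | (MeasurableSpace.comap (fun ω => π (X ω)) inferInstance)]
          =ᵐ[P] P[(fun _ => (1:ℝ)) | (MeasurableSpace.comap (fun ω => π (X ω)) inferInstance)] - P[D | (MeasurableSpace.comap (fun ω => π (X ω)) inferInstance)] := condExp_sub (integrable_const 1) hDi _
        _ =ᵐ[P] fun ω => 1 - π (X ω) := by
            filter_upwards [hDG] with ω hω
            rw [Pi.sub_apply, condExp_const hGle (1:ℝ), hω]
    rw [hind]
    calc P[g - g * D | (MeasurableSpace.comap (fun ω => π (X ω)) inferInstance)]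
        =ᵐ[P] P[g | (MeasurableSpace.comap (fun ω => π (X ω)) inferInstance)] - P[g * D | (MeasurableSpace.comap (fun ω => π (X ω)) inferInstance)] := condExp_sub hgi hgD _
      _ =ᵐ[P] fun ω => (P⟦D ⁻¹' s | (MeasurableSpace.comap (fun ω => π (X ω)) inferInstance)⟧) ω * (P⟦X ⁻¹' t | (MeasurableSpace.comap (fun ω => π (X ω)) inferInstance)⟧) ω := by
          filter_upwards [key t ht, hDs] with ω hk hω
          simp only [Pi.sub_apply, hgdef, hk, hω]
          ring
  · -- only 1 ∈ s : indicator = D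
    have hind : (D ⁻¹' s ∩ X ⁻¹' t).indicator (fun _ => (1:ℝ)) = g * D := by
      funext ω
      by_cases hωt : ω ∈ X ⁻¹' t <;>
        rcases hD01 ω with hω | hω <;>
        simp [Set.indicator_apply, hgdef, hω, hωt, h0, h1]
    have hindD : (D ⁻¹' s).indicator (fun _ => (1:ℝ)) = D := by
      funext ω
      rcases hD01 ω with hω | hω <;> simp [Set.indicator_apply, hω, h0, h1]
    rw [hind, hindD]
    filter_upwards [key t ht, hDG] with ω hk hω
    rw [hk, hω]
  · -- neither : D ⁻¹' s = ∅
    have hsu : D ⁻¹' s = ∅ := by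
      ext ω; rcases hD01 ω with hω | hω <;> simp [hω, h0, h1]
    rw [hsu, Set.empty_inter]
    have hempty : P⟦(∅ : Set Ω) | (MeasurableSpace.comap (fun ω => π (X ω)) inferInstance)⟧ =ᵐ[P] fun _ => (0:ℝ) := by
      rw [Set.indicator_empty]
      exact Filter.EventuallyEq.of_eq condExp_zero
    filter_upwards [hempty] with ω hω
    rw [hω, zero_mul]
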